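/- For any cubic polynomial u and uniform cells of width h, the stencil −(1/24)ū_{i−2} + (5/12)ū_{i−1} + (5/6)ū_i − (1/4)ū_{i+1} + (1/24)ū_{i+2} applied to cell averages exactly recovers u at the left endpoint of the middle cell. -/
import Mathlib


open intervalIntegral

lemma cubic_integral (c0 c1 c2 c3 a b : ℝ) :
    (∫ t in a..b, (c0 + c1 * t + c2 * t^2 + c3 * t^3))
      = c0 * (b - a) + c1 * (b^2 - a^2) / 2 + c2 * (b^3 - a^3) / 3
        + c3 * (b^4 - a^4) / 4 := by
  have i1 : IntervalIntegrable (fun t : ℝ => c0 + c1 * t + c2 * t^2) MeasureTheory.volume a b :=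
    (Continuous.intervalIntegrable (by fun_prop) a b)
  have i2 : IntervalIntegrable (fun t : ℝ => c3 * t^3) MeasureTheory.volume a b :=
    (Continuous.intervalIntegrable (by fun_prop) a b)
  have i3 : IntervalIntegrable (fun t : ℝ => c0 + c1 * t) MeasureTheory.volume a b :=
    (Continuous.intervalIntegrable (by fun_prop) a b)
  have i4 : IntervalIntegrable (fun t : ℝ => c2 * t^2) MeasureTheory.volume a b :=
    (Continuous.intervalIntegrable (by fun_prop) a b)
  have i5 : IntervalIntegrable (fun t : ℝ => (c0 : ℝ)) MeasureTheory.volume a b :=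
    (Continuous.intervalIntegrable (by fun_prop) a b)
  have i6 : IntervalIntegrable (fun t : ℝ => c1 * t) MeasureTheory.volume a b :=
    (Continuous.intervalIntegrable (by fun_prop) a b)
  rw [intervalIntegral.integral_add i1 i2, intervalIntegral.integral_add i3 i4,
      intervalIntegral.integral_add i5 i6,
      intervalIntegral.integral_const,
      intervalIntegral.integral_const_mul, intervalIntegral.integral_const_mul,
      intervalIntegral.integral_const_mul,
      integral_id, integral_pow, integral_pow]
  push_cast
  simp [smul_eq_mul]
  ring

lemma cubic_eval (u : Polynomial ℝ) (hu : u.degree ≤ 3) (t : ℝ) :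
    u.eval t = u.coeff 0 + u.coeff 1 * t + u.coeff 2 * t^2 + u.coeff 3 * t^3 := by
  have hn : u.natDegree < 4 := by
    have : u.natDegree ≤ 3 := Polynomial.natDegree_le_of_degree_le hu
    omega
  rw [Polynomial.eval_eq_sum_range' hn]
  simp [Finset.sum_range_succ]
  try ring

/-- The degree-3 conservative interpolation stencil is exact for cubic polynomials:
`-(1/24)ū_{i-2} + (5/12)ū_{i-1} + (5/6)ū_i - (1/4)ū_{i+1} + (1/24)ū_{i+2} = u(x - h/2)`. -/
theorem stencil_deg3_exact (u : Polynomial ℝ) (hu : u.degree ≤ 3)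
    (x h : ℝ) (hh : 0 < h) :
    -(1/24) * ((∫ t in (x - 5*h/2)..(x - 3*h/2), u.eval t) / h)
      + (5/12) * ((∫ t in (x - 3*h/2)..(x - h/2), u.eval t) / h)
      + (5/6) * ((∫ t in (x - h/2)..(x + h/2), u.eval t) / h)
      - (1/4) * ((∫ t in (x + h/2)..(x + 3*h/2), u.eval t) / h)
      + (1/24) * ((∫ t in (x + 3*h/2)..(x + 5*h/2), u.eval t) / h)
      = u.eval (x - h/2) := by
  simp only [cubic_eval u hu, cubic_integral]
  field_simp
  ring
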